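/- Let Γ, γ, τ > 0 be real constants and let x : ℝ → ℝ be three times differentiable and θ, u, v : ℝ → ℝ be such that, for all t: ẍ(t) = Γ·sin θ(t) − γ·ẋ(t), θ̇(t) = τ⁻¹(u(t) − θ(t)), and θ(t) ∈ (−π/2, π/2). Define ζ(t) = Γ⁻¹(ẍ(t) + γ·ẋ(t)), and suppose u(t) = τ·(v(t) + γ·ẍ(t)) / (Γ·√(1 − ζ(t)²)) + arcsin(ζ(t)). Then the third derivative of x satisfies x⁗⁽³⁾(t) = v(t) for all t, i.e., dddot x = v. -/

import Mathlib

open Real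

/-- feedback linearization of the horizontal 1-D quadrotor
`ẍ = Γ sin θ − γ ẋ`, `θ̇ = τ⁻¹(u − θ)` with `θ(t) ∈ (−π/2, π/2)`: with
`ζ = Γ⁻¹(ẍ + γẋ)`, the input transformation
`u = τ(v + γẍ)/(Γ√(1 − ζ²)) + arcsin ζ` renders the closed loop a triple
integrator, `dddot x = v`. -/
theorem quad1D_feedback_linearization
    (Γ γ τ : ℝ) (hΓ : 0 < Γ) (hγ : 0 < γ) (hτ : 0 < τ)
    (x θ u v ζ : ℝ → ℝ)
    (hx1 : Differentiable ℝ x)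
    (hx2 : Differentiable ℝ (deriv x))
    (hx3 : Differentiable ℝ (deriv (deriv x)))
    (hθdiff : Differentiable ℝ θ)
    (hdyn1 : ∀ t, deriv (deriv x) t = Γ * Real.sin (θ t) - γ * deriv x t)
    (hdyn2 : ∀ t, deriv θ t = τ⁻¹ * (u t - θ t))
    (hθrange : ∀ t, θ t ∈ Set.Ioo (-(π / 2)) (π / 2))
    (hζ : ∀ t, ζ t = Γ⁻¹ * (deriv (deriv x) t + γ * deriv x t))
    (hu : ∀ t, u t = τ * (v t + γ * deriv (deriv x) t) / (Γ * Real.sqrt (1 - ζ t ^ 2))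
      + Real.arcsin (ζ t)) :
    ∀ t, deriv (deriv (deriv x)) t = v t := by
  intro t
  have hcos : 0 < Real.cos (θ t) := Real.cos_pos_of_mem_Ioo (hθrange t)
  have hζs : ζ t = Real.sin (θ t) := by
    rw [hζ t, hdyn1 t]; field_simp; ring
  have hsqrt : Real.sqrt (1 - ζ t ^ 2) = Real.cos (θ t) := by
    rw [hζs, ← Real.cos_sq']
    exact Real.sqrt_sq hcos.le
  have harcsin : Real.arcsin (ζ t) = θ t := by
    rw [hζs]
    exact Real.arcsin_sin (le_of_lt (hθrange t).1) (le_of_lt (hθrange t).2)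
  have hθd : deriv θ t = (v t + γ * deriv (deriv x) t) / (Γ * Real.cos (θ t)) := by
    rw [hdyn2 t, hu t, hsqrt, harcsin]
    field_simp
    ring
  have h1 : HasDerivAt (fun s => Γ * Real.sin (θ s) - γ * deriv x s)
      (Γ * (Real.cos (θ t) * deriv θ t) - γ * deriv (deriv x) t) t :=
    (((Real.hasDerivAt_sin (θ t)).comp t (hθdiff t).hasDerivAt).const_mul Γ).sub
      ((hx2 t).hasDerivAt.const_mul γ)
  have h2 : deriv (deriv x) = fun s => Γ * Real.sin (θ s) - γ * deriv x s := funext hdyn1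
  rw [h2, h1.deriv, hθd]
  field_simp
  ring
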